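/- Let p ≥ 30 be a prime with −1 a quadratic residue and 2, 3 non-residues mod p. Then the path system 𝒫_p on the Paley graph G_p is irreducible: there is no partition 𝔽_p = A ⊔ B with A, B nonempty such that for all u, v ∈ A all vertices of P_{u,v} lie in A, and for all u, v ∈ B all vertices of P_{u,v} lie in B. -/

import Mathlib

open scoped Classical

/-- `a` is a (nonzero) quadratic residue in `ZMod p`. -/
def IsQR (p : ℕ) (a : ZMod p) : Prop := a ≠ 0 ∧ IsSquare a

/-- The Paley graph on `𝔽_p`: `a ~ b` iff `a - b` is a nonzero quadratic residue.
(The adjacency is stated symmetrically; when `-1` is a residue this agrees with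
the usual definition.) -/
def paley (p : ℕ) : SimpleGraph (ZMod p) where
  Adj a b := a ≠ b ∧ IsSquare (a - b) ∧ IsSquare (b - a)
  symm := by constructor; intro a b h; exact ⟨h.1.symm, h.2.2, h.2.1⟩
  loopless := by constructor; intro a h; exact h.1 rfl

/-- The list of vertices of the path `P_{a,b}` of the path system `𝒫_p`. -/
noncomputable def specList (p : ℕ) (a b : ZMod p) : List (ZMod p) :=
  if IsQR p (b - a) then [a, b]
  else if b - a = 3 then [a, a + 1, a + 2, b]
  else [a, (a + b) * (2 : ZMod p)⁻¹, b]

private lemma two_class {P Q R : Prop} (h1 : ¬(P ↔ Q)) (h2 : ¬(P ↔ R)) : Q ↔ R := by tauto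

private lemma sq_between (a : ℕ) (ha : 1 ≤ a) :
    ∃ k : ℕ, 1 ≤ k ∧ a ≤ k^2 ∧ k^2 ≤ a + 2 * Nat.sqrt (a - 1) := by
  refine ⟨Nat.sqrt (a-1) + 1, by omega, ?_, ?_⟩
  · nlinarith [Nat.lt_succ_sqrt (a-1), Nat.sub_add_cancel ha]
  · nlinarith [Nat.sqrt_le (a-1), Nat.sub_add_cancel ha]

private lemma L_mid {p : ℕ} [Fact p.Prime] {A B : Set (ZMod p)}
    (hcov : ∀ v, v ∈ A ∨ v ∈ B) (hdis : ∀ v, ¬ (v ∈ A ∧ v ∈ B))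
    (hA : ∀ u ∈ A, ∀ v ∈ A, u ≠ v → ∀ w ∈ specList p u v, w ∈ A)
    (hB : ∀ u ∈ B, ∀ v ∈ B, u ≠ v → ∀ w ∈ specList p u v, w ∈ B)
    (h2ne : (2 : ZMod p) ≠ 0)
    {x d : ZMod p} (hd0 : d ≠ 0) (hds : ¬ IsSquare d) (hd3 : d ≠ 3)
    (h : x ∈ A ↔ x + d ∈ A) : (x ∈ A ↔ x + d * (2 : ZMod p)⁻¹ ∈ A) := by
  have hxy : x ≠ x + d := by
    intro he; exact hd0 (by simpa using (left_eq_add.mp he))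
  have hlist : specList p x (x + d) = [x, (x + (x + d)) * (2 : ZMod p)⁻¹, x + d] := by
    unfold specList
    rw [add_sub_cancel_left, if_neg (fun hq : IsQR p d => hds hq.2), if_neg hd3]
  have hmide : (x + (x + d)) * (2 : ZMod p)⁻¹ = x + d * (2 : ZMod p)⁻¹ := by
    field_simp; ring
  by_cases hx : x ∈ A
  · have hx2 : x + d ∈ A := h.mp hx
    have hm := hA x hx (x + d) hx2 hxy ((x + (x + d)) * (2 : ZMod p)⁻¹)
      (by rw [hlist]; simp)
    rw [hmide] at hm
    exact iff_of_true hx hm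
  · have hxB : x ∈ B := (hcov x).resolve_left hx
    have hx2 : x + d ∉ A := fun h' => hx (h.mpr h')
    have hx2B : x + d ∈ B := (hcov _).resolve_left hx2
    have hm := hB x hxB (x + d) hx2B hxy ((x + (x + d)) * (2 : ZMod p)⁻¹)
      (by rw [hlist]; simp)
    rw [hmide] at hm
    exact iff_of_false hx (fun h' => hdis _ ⟨h', hm⟩)

private lemma L_three {p : ℕ} [Fact p.Prime] {A B : Set (ZMod p)}
    (hcov : ∀ v, v ∈ A ∨ v ∈ B) (hdis : ∀ v, ¬ (v ∈ A ∧ v ∈ B))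
    (hA : ∀ u ∈ A, ∀ v ∈ A, u ≠ v → ∀ w ∈ specList p u v, w ∈ A)
    (hB : ∀ u ∈ B, ∀ v ∈ B, u ≠ v → ∀ w ∈ specList p u v, w ∈ B)
    (h3 : ¬ IsQR p 3) (h30 : (3 : ZMod p) ≠ 0)
    {x : ZMod p} (h : x ∈ A ↔ x + 3 ∈ A) :
    (x ∈ A ↔ x + 1 ∈ A) ∧ (x ∈ A ↔ x + 2 ∈ A) := by
  have hxy : x ≠ x + 3 := by
    intro he; exact h30 (by simpa using (left_eq_add.mp he))
  have hlist : specList p x (x + 3) = [x, x + 1, x + 2, x + 3] := by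
    unfold specList
    rw [add_sub_cancel_left, if_neg h3, if_pos rfl]
  by_cases hx : x ∈ A
  · have hx2 : x + 3 ∈ A := h.mp hx
    have hm1 := hA x hx (x + 3) hx2 hxy (x + 1) (by rw [hlist]; simp)
    have hm2 := hA x hx (x + 3) hx2 hxy (x + 2) (by rw [hlist]; simp)
    exact ⟨iff_of_true hx hm1, iff_of_true hx hm2⟩
  · have hxB : x ∈ B := (hcov x).resolve_left hx
    have hx2 : x + 3 ∉ A := fun h' => hx (h.mpr h')
    have hx2B : x + 3 ∈ B := (hcov _).resolve_left hx2
    have hm1 := hB x hxB (x + 3) hx2B hxy (x + 1) (by rw [hlist]; simp)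
    have hm2 := hB x hxB (x + 3) hx2B hxy (x + 2) (by rw [hlist]; simp)
    exact ⟨iff_of_false hx (fun h' => hdis _ ⟨h', hm1⟩),
      iff_of_false hx (fun h' => hdis _ ⟨h', hm2⟩)⟩

private lemma choose_m {p : ℕ} [Fact p.Prime] (hp30 : 30 ≤ p)
    (h1s : IsSquare (-1 : ZMod p)) (h2s : ¬ IsSquare (2 : ZMod p))
    {n : ℕ} (hn3 : 3 ≤ n) (hnp : 2*n + 1 ≤ p) :
    ∃ m : ℕ, n + 1 ≤ 2*m ∧ 2*m + 1 ≤ 3*n ∧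
      ¬ IsSquare ((2*m : ℕ) : ZMod p) ∧ ((2*m : ℕ) : ZMod p) ≠ 3 ∧
      ((2*m : ℕ) : ZMod p) ≠ 0 := by
  have hp : p.Prime := Fact.out
  have h2ne : (2 : ZMod p) ≠ 0 := by
    rw [show (2 : ZMod p) = ((2 : ℕ) : ZMod p) by push_cast; ring,
      Ne, ZMod.natCast_eq_zero_iff]
    intro hdv
    exact absurd (Nat.le_of_dvd (by norm_num) hdv) (by omega)
  -- step 1 : a square roughly between n/2 and 3n/2
  obtain ⟨k, hk1, hk2, hk3⟩ : ∃ k : ℕ, 1 ≤ k ∧ n + 1 ≤ 2*k^2 ∧ 2*k^2 + 1 ≤ 3*n := by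
    rcases eq_or_lt_of_le hn3 with h3 | h4
    · exact ⟨2, by norm_num, by omega, by omega⟩
    · obtain ⟨k, hk1, hk2, hk3⟩ := sq_between (n/2 + 1) (by omega)
      have hs : Nat.sqrt (n/2) < n/2 := Nat.sqrt_lt_self (by omega)
      have e : n/2 + 1 - 1 = n/2 := by omega
      rw [e] at hk3
      obtain ⟨K, hK⟩ : ∃ K, K = k^2 := ⟨_, rfl⟩
      rw [← hK] at hk2 hk3
      exact ⟨k, hk1, by rw [← hK]; omega, by rw [← hK]; omega⟩
  obtain ⟨K, hK⟩ : ∃ K, K = k^2 := ⟨_, rfl⟩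
  rw [← hK] at hk2 hk3
  have hkp : K < p := by omega
  have hkne : (k : ZMod p) ≠ 0 := by
    rw [Ne, ZMod.natCast_eq_zero_iff]
    intro hdv
    have h1 : p ≤ k := Nat.le_of_dvd (by omega) hdv
    have h2' : k ≤ K := by rw [hK]; exact Nat.le_self_pow (by norm_num) k
    omega
  by_cases hbad : 2*K = p + 3
  · -- bad case : 2 k² = p + 3 ; use m = p - l²
    have h3n : p + 4 ≤ 3*n := by omega
    set a := (2*p + 2 - 3*n)/2 with hadef
    have ha1 : 1 ≤ a := by omega
    obtain ⟨l, hl1, hl2, hl3⟩ := sq_between a ha1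
    obtain ⟨L, hL⟩ : ∃ L, L = l^2 := ⟨_, rfl⟩
    rw [← hL] at hl2 hl3
    set s := Nat.sqrt (a - 1) with hsdef
    obtain ⟨S, hS⟩ : ∃ S, S = s*s := ⟨_, rfl⟩
    have hss : S ≤ a - 1 := by rw [hS]; exact Nat.sqrt_le _
    have hsb : 4*s + 3 ≤ 2*n := by
      rcases le_or_gt s 2 with h | h
      · omega
      · have h1' : 2*S + 4 ≤ p := by omega
        nlinarith [hS]
    have hl2ub : 2*L + n + 1 ≤ 2*p := by omega
    have hl2lo : 2*p + 1 ≤ 2*L + 3*n := by omega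
    have hlp : L < p := by omega
    have hl0 : (l : ZMod p) ≠ 0 := by
      rw [Ne, ZMod.natCast_eq_zero_iff]
      intro hdv
      have h1 : p ≤ l := Nat.le_of_dvd (by omega) hdv
      have h2' : l ≤ L := by rw [hL]; exact Nat.le_self_pow (by norm_num) l
      omega
    refine ⟨p - L, by omega, by omega, ?_, ?_, ?_⟩
    · -- not a square
      have hle : l^2 ≤ p := by rw [← hL]; omega
      have hcast : ((2*(p - L) : ℕ) : ZMod p) = -(2 * (l : ZMod p)^2) := by
        rw [hL]
        push_cast [Nat.cast_sub hle]
        rw [ZMod.natCast_self]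
        ring
      rw [hcast]
      intro hsq
      apply h2s
      have he : (2 : ZMod p) = (-(2 * (l : ZMod p)^2) * (-1)) * ((l : ZMod p)⁻¹)^2 := by
        field_simp
      rw [he]
      exact (hsq.mul h1s).mul (IsSquare.sq _)
    · -- ≠ 3
      intro h3e
      have hz : (((2*L + 3 : ℕ) : ℤ) : ZMod p) = 0 := by
        have hcast : ((2*(p - L) : ℕ) : ZMod p) = ((2*p : ℕ) : ZMod p) - ((2*L : ℕ) : ZMod p) := by
          push_cast [Nat.cast_sub hlp.le]; ring
        have hp0 : ((2*p : ℕ) : ZMod p) = 0 := by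
          push_cast [ZMod.natCast_self]; ring
        rw [hcast, hp0] at h3e
        push_cast
        have h2L : ((2*L : ℕ) : ZMod p) = -3 := by
          have := h3e
          linear_combination -this
        push_cast at h2L
        linear_combination h2L
      rw [ZMod.intCast_zmod_eq_zero_iff_dvd] at hz
      obtain ⟨c, hc⟩ := hz
      have hcpos : 0 < c := by
        rcases le_or_gt c 0 with h | h
        · exfalso
          have : (p : ℤ) * c ≤ 0 := mul_nonpos_of_nonneg_of_nonpos (by positivity) h
          omega
        · exact h
      have hcle : c < 2 := by
        rcases le_or_gt 2 c with h | h
        · exfalso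
          have : (p : ℤ) * 2 ≤ (p : ℤ) * c := by
            have : (0:ℤ) ≤ p := by positivity
            nlinarith
          omega
        · exact h
      have hc1 : c = 1 := by omega
      rw [hc1, mul_one] at hc
      -- 2L + 3 = p, and 2K = p + 3 : K - L = 3
      have hKL : K = L + 3 := by omega
      have hlk : l < k := by
        by_contra hcon
        push_neg at hcon
        have := Nat.pow_le_pow_left hcon 2
        omega
      have hpow : (l+1)^2 ≤ k^2 := Nat.pow_le_pow_left (by omega) 2
      rw [← hK] at hpow
      have hexp : (l+1)^2 = l^2 + 2*l + 1 := by ring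
      rw [hexp, ← hL] at hpow
      have hl1' : l ≤ 1 := by omega
      have hL1 : L ≤ 1 := by
        rw [hL]
        exact le_trans (Nat.pow_le_pow_left hl1' 2) (by norm_num)
      omega
    · -- ≠ 0
      have hle : l^2 ≤ p := by rw [← hL]; omega
      have hcast : ((2*(p - L) : ℕ) : ZMod p) = -(2 * (l : ZMod p)^2) := by
        rw [hL]
        push_cast [Nat.cast_sub hle]
        rw [ZMod.natCast_self]
        ring
      rw [hcast, neg_ne_zero]
      exact mul_ne_zero h2ne (pow_ne_zero _ hl0)
  · -- good case : m = k²
    refine ⟨K, by omega, by omega, ?_, ?_, ?_⟩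
    · have hcast : ((2*K : ℕ) : ZMod p) = 2 * (k : ZMod p)^2 := by
        rw [hK]; push_cast; ring
      rw [hcast]
      intro hsq
      apply h2s
      have he : (2 : ZMod p) = (2 * (k : ZMod p)^2) * ((k : ZMod p)⁻¹)^2 := by
        field_simp
      rw [he]
      exact hsq.mul (IsSquare.sq _)
    · intro h3e
      have h3e' : (K : ZMod p) * 2 = 3 := by push_cast at h3e; linear_combination h3e
      have hz : (((2*K : ℤ) - 3 : ℤ) : ZMod p) = 0 := by
        push_cast
        linear_combination h3e'
      rw [ZMod.intCast_zmod_eq_zero_iff_dvd] at hz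
      obtain ⟨c, hc⟩ := hz
      have hcpos : 0 < c := by
        rcases le_or_gt c 0 with h | h
        · exfalso
          have : (p : ℤ) * c ≤ 0 := mul_nonpos_of_nonneg_of_nonpos (by positivity) h
          omega
        · exact h
      have hcle : c < 2 := by
        rcases le_or_gt 2 c with h | h
        · exfalso
          have : (p : ℤ) * 2 ≤ (p : ℤ) * c := by
            have : (0:ℤ) ≤ p := by positivity
            nlinarith
          omega
        · exact h
      have hc1 : c = 1 := by omega
      rw [hc1, mul_one] at hc
      omega
    · have hcast : ((2*K : ℕ) : ZMod p) = 2 * (k : ZMod p)^2 := by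
        rw [hK]; push_cast; ring
      rw [hcast]
      exact mul_ne_zero h2ne (pow_ne_zero _ hkne)

theorem stmt_12 (p : ℕ) [Fact p.Prime] (hp : 30 ≤ p)
    (h1 : IsQR p (-1)) (h2 : ¬ IsQR p 2) (h3 : ¬ IsQR p 3) :
    ¬ ∃ A B : Set (ZMod p), A.Nonempty ∧ B.Nonempty ∧
      (∀ v, v ∈ A ∨ v ∈ B) ∧ (∀ v, ¬ (v ∈ A ∧ v ∈ B)) ∧
      (∀ u ∈ A, ∀ v ∈ A, u ≠ v → ∀ w ∈ specList p u v, w ∈ A) ∧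
      (∀ u ∈ B, ∀ v ∈ B, u ≠ v → ∀ w ∈ specList p u v, w ∈ B) := by
  rintro ⟨A, B, ⟨a0, ha0⟩, ⟨b0, hb0⟩, hcov, hdis, hA, hB⟩
  have hpp : p.Prime := Fact.out
  haveI : NeZero p := ⟨by omega⟩
  have hodd : p % 2 = 1 := by
    rcases hpp.eq_two_or_odd with h | h
    · omega
    · exact h
  have h2ne : (2 : ZMod p) ≠ 0 := by
    rw [show (2 : ZMod p) = ((2 : ℕ) : ZMod p) by push_cast; ring,
      Ne, ZMod.natCast_eq_zero_iff]
    intro hdv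
    exact absurd (Nat.le_of_dvd (by norm_num) hdv) (by omega)
  have h3ne : (3 : ZMod p) ≠ 0 := by
    rw [show (3 : ZMod p) = ((3 : ℕ) : ZMod p) by push_cast; ring,
      Ne, ZMod.natCast_eq_zero_iff]
    intro hdv
    exact absurd (Nat.le_of_dvd (by norm_num) hdv) (by omega)
  have h23 : (2 : ZMod p) ≠ 3 := by
    intro h
    have h1' : ((1 : ℕ) : ZMod p) = 0 := by push_cast; linear_combination -h
    rw [ZMod.natCast_eq_zero_iff] at h1'
    exact absurd (Nat.le_of_dvd (by norm_num) h1') (by omega)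
  have h2s : ¬ IsSquare (2 : ZMod p) := fun hs => h2 ⟨h2ne, hs⟩
  have h1s : IsSquare (-1 : ZMod p) := h1.2
  have castp1 : ((p - 1 : ℕ) : ZMod p) = -1 := by
    push_cast [Nat.cast_sub (show 1 ≤ p by omega)]
    rw [ZMod.natCast_self]
    ring
  -- there is a boundary point
  have hbd : ∃ x : ZMod p, ¬ (x ∈ A ↔ x + 1 ∈ A) := by
    by_contra hc
    simp only [not_exists, not_not] at hc
    have hstep : ∀ k : ℕ, a0 + (k : ZMod p) ∈ A := by
      intro k
      induction k with
      | zero => simpa using ha0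
      | succ k ih =>
        have h' := (hc (a0 + (k : ZMod p))).mp ih
        have e : a0 + ((k+1 : ℕ) : ZMod p) = a0 + (k : ZMod p) + 1 := by push_cast; ring
        rw [e]; exact h'
    have hb0A : b0 ∈ A := by
      have h' := hstep (b0 - a0).val
      rw [ZMod.natCast_val, ZMod.cast_id] at h'
      simpa using h'
    exact hdis b0 ⟨hb0A, hb0⟩
  obtain ⟨x₀, hx₀⟩ := hbd
  -- the run starting right after x₀
  have hP0w : 1 ≤ p - 1 ∧ ¬ (x₀ + 1 ∈ A ↔ x₀ + 1 + ((p-1 : ℕ) : ZMod p) ∈ A) := by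
    refine ⟨by omega, ?_⟩
    rw [castp1, show x₀ + 1 + (-1 : ZMod p) = x₀ by ring]
    exact fun h => hx₀ h.symm
  have hP0ex : ∃ k : ℕ, 1 ≤ k ∧ ¬ (x₀ + 1 ∈ A ↔ x₀ + 1 + (k : ZMod p) ∈ A) := ⟨p - 1, hP0w⟩
  obtain ⟨k0, hk0, hk0min⟩ :
      ∃ k : ℕ, (1 ≤ k ∧ ¬ (x₀ + 1 ∈ A ↔ x₀ + 1 + (k : ZMod p) ∈ A)) ∧
        ∀ t : ℕ, t < k → ¬ (1 ≤ t ∧ ¬ (x₀ + 1 ∈ A ↔ x₀ + 1 + (t : ZMod p) ∈ A)) :=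
    ⟨Nat.find hP0ex, Nat.find_spec hP0ex, fun t ht => Nat.find_min hP0ex ht⟩
  have hk0le : k0 ≤ p - 1 := le_of_not_gt (fun h' => hk0min _ h' hP0w)
  -- minimal run length n
  have hQQk0 : 1 ≤ k0 ∧ ∃ y : ZMod p,
      (∀ i : ℕ, i < k0 → (y ∈ A ↔ y + (i : ZMod p) ∈ A)) ∧
      ¬ (y ∈ A ↔ y + (k0 : ZMod p) ∈ A) ∧ ¬ (y ∈ A ↔ y - 1 ∈ A) := by
    refine ⟨hk0.1, x₀ + 1, ?_, hk0.2, ?_⟩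
    · intro i hik
      rcases Nat.eq_zero_or_pos i with h0 | h1
      · subst h0; simp
      · by_contra hb
        exact hk0min i hik ⟨h1, hb⟩
    · rw [show x₀ + 1 - 1 = x₀ by ring]
      exact fun h => hx₀ h.symm
  have hQQex : ∃ k : ℕ, 1 ≤ k ∧ ∃ y : ZMod p,
      (∀ i : ℕ, i < k → (y ∈ A ↔ y + (i : ZMod p) ∈ A)) ∧
      ¬ (y ∈ A ↔ y + (k : ZMod p) ∈ A) ∧ ¬ (y ∈ A ↔ y - 1 ∈ A) := ⟨k0, hQQk0⟩
  obtain ⟨n, hnspec, hnmin⟩ :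
      ∃ m : ℕ, (1 ≤ m ∧ ∃ y : ZMod p,
        (∀ i : ℕ, i < m → (y ∈ A ↔ y + (i : ZMod p) ∈ A)) ∧
        ¬ (y ∈ A ↔ y + (m : ZMod p) ∈ A) ∧ ¬ (y ∈ A ↔ y - 1 ∈ A)) ∧
      ∀ t : ℕ, t < m → ¬ (1 ≤ t ∧ ∃ y : ZMod p,
        (∀ i : ℕ, i < t → (y ∈ A ↔ y + (i : ZMod p) ∈ A)) ∧
        ¬ (y ∈ A ↔ y + (t : ZMod p) ∈ A) ∧ ¬ (y ∈ A ↔ y - 1 ∈ A)) :=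
    ⟨Nat.find hQQex, Nat.find_spec hQQex, fun t ht => Nat.find_min hQQex ht⟩
  obtain ⟨hn1, y, C1, hCn, hCm1⟩ := hnspec
  have hnle : n ≤ k0 := le_of_not_gt (fun h' => hnmin _ h' hQQk0)
  have hnp1 : n ≤ p - 1 := le_trans hnle hk0le
  -- the run to the left of y has length ≥ n
  have hP1w : 1 ≤ p - 1 ∧ ¬ (y - 1 ∈ A ↔ y - 1 - ((p-1 : ℕ) : ZMod p) ∈ A) := by
    refine ⟨by omega, ?_⟩
    rw [castp1, show y - 1 - (-1 : ZMod p) = y by ring]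
    exact fun h => hCm1 h.symm
  have hP1ex : ∃ k : ℕ, 1 ≤ k ∧ ¬ (y - 1 ∈ A ↔ y - 1 - (k : ZMod p) ∈ A) := ⟨p - 1, hP1w⟩
  obtain ⟨k1, hk1, hk1min⟩ :
      ∃ k : ℕ, (1 ≤ k ∧ ¬ (y - 1 ∈ A ↔ y - 1 - (k : ZMod p) ∈ A)) ∧
        ∀ t : ℕ, t < k → ¬ (1 ≤ t ∧ ¬ (y - 1 ∈ A ↔ y - 1 - (t : ZMod p) ∈ A)) :=
    ⟨Nat.find hP1ex, Nat.find_spec hP1ex, fun t ht => Nat.find_min hP1ex ht⟩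
  have hsame1 : ∀ t : ℕ, t < k1 → (y - 1 ∈ A ↔ y - 1 - (t : ZMod p) ∈ A) := by
    intro t ht
    rcases Nat.eq_zero_or_pos t with h0 | h1
    · subst h0; simp
    · by_contra hb
      exact hk1min t ht ⟨h1, hb⟩
  have hQQk1 : 1 ≤ k1 ∧ ∃ z : ZMod p,
      (∀ i : ℕ, i < k1 → (z ∈ A ↔ z + (i : ZMod p) ∈ A)) ∧
      ¬ (z ∈ A ↔ z + (k1 : ZMod p) ∈ A) ∧ ¬ (z ∈ A ↔ z - 1 ∈ A) := by
    have hk11 := hk1.1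
    have e1 : y - (k1 : ZMod p) = y - 1 - ((k1 - 1 : ℕ) : ZMod p) := by
      push_cast [Nat.cast_sub hk11]
      ring
    have hz1 : (y - 1 ∈ A ↔ y - (k1 : ZMod p) ∈ A) := by
      rw [e1]; exact hsame1 (k1-1) (by omega)
    refine ⟨hk11, y - (k1 : ZMod p), ?_, ?_, ?_⟩
    · intro i hik
      have e2 : y - (k1 : ZMod p) + (i : ZMod p) = y - 1 - ((k1 - 1 - i : ℕ) : ZMod p) := by
        push_cast [Nat.cast_sub hk11, Nat.cast_sub (show i ≤ k1 - 1 by omega)]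
        ring
      rw [e2]
      have h2' := hsame1 (k1 - 1 - i) (by omega)
      exact hz1.symm.trans h2'
    · rw [show y - (k1 : ZMod p) + (k1 : ZMod p) = y by ring]
      intro hcon
      exact hCm1 (hz1.trans hcon).symm
    · rw [show y - (k1 : ZMod p) - 1 = y - 1 - (k1 : ZMod p) by ring]
      intro hcon
      exact hk1.2 (hz1.trans hcon)
  have hk1ge : n ≤ k1 := le_of_not_gt (fun h' => hnmin _ h' hQQk1)
  have C2 : ∀ i : ℕ, 1 ≤ i → i ≤ n → ¬ (y ∈ A ↔ y - (i : ZMod p) ∈ A) := by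
    intro i hi1 hi2
    have e : y - (i : ZMod p) = y - 1 - ((i - 1 : ℕ) : ZMod p) := by
      push_cast [Nat.cast_sub hi1]
      ring
    have hs := hsame1 (i - 1) (by omega)
    rw [e]
    intro hcon
    exact hCm1 (hcon.trans hs.symm)
  -- the run to the right of the run of y has length ≥ n
  have hP2w : 1 ≤ p - n ∧
      ¬ (y + (n : ZMod p) ∈ A ↔ y + (n : ZMod p) + ((p - n : ℕ) : ZMod p) ∈ A) := by
    refine ⟨by omega, ?_⟩
    have e : ((p - n : ℕ) : ZMod p) = -(n : ZMod p) := by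
      push_cast [Nat.cast_sub (show n ≤ p by omega)]
      rw [ZMod.natCast_self]
      ring
    rw [e, show y + (n : ZMod p) + -(n : ZMod p) = y by ring]
    exact fun h => hCn h.symm
  have hP2ex : ∃ k : ℕ, 1 ≤ k ∧
      ¬ (y + (n : ZMod p) ∈ A ↔ y + (n : ZMod p) + (k : ZMod p) ∈ A) := ⟨p - n, hP2w⟩
  obtain ⟨k2, hk2, hk2min⟩ :
      ∃ k : ℕ, (1 ≤ k ∧ ¬ (y + (n : ZMod p) ∈ A ↔ y + (n : ZMod p) + (k : ZMod p) ∈ A)) ∧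
        ∀ t : ℕ, t < k →
          ¬ (1 ≤ t ∧ ¬ (y + (n : ZMod p) ∈ A ↔ y + (n : ZMod p) + (t : ZMod p) ∈ A)) :=
    ⟨Nat.find hP2ex, Nat.find_spec hP2ex, fun t ht => Nat.find_min hP2ex ht⟩
  have hsame2 : ∀ t : ℕ, t < k2 → (y + (n : ZMod p) ∈ A ↔ y + (n : ZMod p) + (t : ZMod p) ∈ A) := by
    intro t ht
    rcases Nat.eq_zero_or_pos t with h0 | h1
    · subst h0; simp
    · by_contra hb
      exact hk2min t ht ⟨h1, hb⟩
  have hQQk2 : 1 ≤ k2 ∧ ∃ z : ZMod p,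
      (∀ i : ℕ, i < k2 → (z ∈ A ↔ z + (i : ZMod p) ∈ A)) ∧
      ¬ (z ∈ A ↔ z + (k2 : ZMod p) ∈ A) ∧ ¬ (z ∈ A ↔ z - 1 ∈ A) := by
    refine ⟨hk2.1, y + (n : ZMod p), hsame2, hk2.2, ?_⟩
    have e : y + (n : ZMod p) - 1 = y + ((n - 1 : ℕ) : ZMod p) := by
      push_cast [Nat.cast_sub hn1]
      ring
    rw [e]
    have h' := C1 (n-1) (by omega)
    intro hcon
    exact hCn (h'.trans hcon.symm)
  have hk2ge : n ≤ k2 := le_of_not_gt (fun h' => hnmin _ h' hQQk2)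
  have C3 : ∀ j : ℕ, 1 ≤ j → j ≤ n → ¬ (y ∈ A ↔ y + ((n - 1 + j : ℕ) : ZMod p) ∈ A) := by
    intro j hj1 hj2
    have e : y + ((n - 1 + j : ℕ) : ZMod p) = y + (n : ZMod p) + ((j - 1 : ℕ) : ZMod p) := by
      push_cast [Nat.cast_sub hn1, Nat.cast_sub hj1]
      ring
    have hs := hsame2 (j-1) (by omega)
    rw [e]
    intro hcon
    exact hCn (hcon.trans hs.symm)
  -- n ≥ 3
  have hn_ne1 : n ≠ 1 := by
    intro hn
    have hyp1 : ¬ (y ∈ A ↔ y + 1 ∈ A) := by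
      have h' := hCn
      rw [hn] at h'
      simpa using h'
    have hsame : (y - 1 ∈ A ↔ y - 1 + 2 ∈ A) := by
      rw [show y - 1 + 2 = y + 1 by ring]
      exact two_class hCm1 hyp1
    have hm := L_mid hcov hdis hA hB h2ne h2ne h2s h23 hsame
    have e : y - 1 + 2 * (2 : ZMod p)⁻¹ = y := by
      rw [mul_inv_cancel₀ h2ne]; ring
    rw [e] at hm
    exact hCm1 hm.symm
  have hn_ne2 : n ≠ 2 := by
    intro hn
    have hyp2 : ¬ (y ∈ A ↔ y + 2 ∈ A) := by
      have h' := hCn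
      rw [hn] at h'
      simpa using h'
    have hsame : (y - 1 ∈ A ↔ y - 1 + 3 ∈ A) := by
      rw [show y - 1 + 3 = y + 2 by ring]
      exact two_class hCm1 hyp2
    have hm := (L_three hcov hdis hA hB h3 h3ne hsame).1
    rw [show y - 1 + 1 = y by ring] at hm
    exact hCm1 hm.symm
  have hn3 : 3 ≤ n := by omega
  -- 2n + 1 ≤ p
  have hnp : 2*n + 1 ≤ p := by
    by_contra hcon
    push_neg at hcon
    have hne : p ≠ 2*n := by intro h'; omega
    have h1' := C1 (p - n) (by omega)
    have e : y + ((p - n : ℕ) : ZMod p) = y - (n : ZMod p) := by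
      push_cast [Nat.cast_sub (show n ≤ p by omega)]
      rw [ZMod.natCast_self]
      ring
    rw [e] at h1'
    exact C2 n (by omega) (le_refl n) h1'
  -- select the scale m
  obtain ⟨m, hm1, hm2, hmsq, hm3, hm0⟩ := choose_m hp h1s h2s hn3 hnp
  -- the final contradiction
  have key : ∀ i j μ : ℕ, 1 ≤ i → i ≤ n → 1 ≤ j → j ≤ n → μ < n →
      2*m = i + (n - 1 + j) → m = i + μ → False := by
    intro i j μ hi1 hin hj1 hjn hμ heq1 heq2
    have hiA := C2 i hi1 hin
    have hjA := C3 j hj1 hjn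
    have ecast : ((2*m : ℕ) : ZMod p) = (i : ZMod p) + ((n - 1 + j : ℕ) : ZMod p) := by
      rw [← Nat.cast_add]
      exact congrArg _ heq1
    have hsame : (y - (i : ZMod p) ∈ A ↔ y - (i : ZMod p) + ((2*m : ℕ) : ZMod p) ∈ A) := by
      rw [show y - (i : ZMod p) + ((2*m : ℕ) : ZMod p) = y + ((n - 1 + j : ℕ) : ZMod p) by
        rw [ecast]; ring]
      exact two_class hiA hjA
    have hmid := L_mid hcov hdis hA hB h2ne hm0 hmsq hm3 hsame
    have e2 : y - (i : ZMod p) + ((2*m : ℕ) : ZMod p) * (2 : ZMod p)⁻¹ = y + (μ : ZMod p) := by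
      have hm' : ((2*m : ℕ) : ZMod p) = (m : ZMod p) * 2 := by push_cast; ring
      have hμ' : (m : ZMod p) = (i : ZMod p) + (μ : ZMod p) := by
        rw [heq2]; push_cast; ring
      rw [hm', mul_assoc, mul_inv_cancel₀ h2ne, mul_one, hμ']
      ring
    rw [e2] at hmid
    have hμA := C1 μ hμ
    exact hiA (hμA.trans hmid.symm)
  rcases le_or_gt (2*m) (2*n) with hc | hc
  · exact key 1 (2*m - n) (m - 1) (by omega) (by omega) (by omega) (by omega)
      (by omega) (by omega) (by omega)
  · exact key (2*m + 1 - 2*n) n (2*n - 1 - m) (by omega) (by omega) (by omega) (by omega)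
      (by omega) (by omega) (by omega)
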